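/- Let k be a field and R = k[x,y]. Fix integers 0 = a_0 < a_1 < ⋯ < a_r = d (r ≥ 1), set b_i = d − a_i, let I = ⟨x^{a_0}y^{b_0}, …, x^{a_r}y^{b_r}⟩ ⊆ R, and let S = ⟨a_0, …, a_r⟩ and T = ⟨b_0, …, b_r⟩ be the numerical semigroups generated by the exponents. Then there exists an integer L such that for every l ≥ L, I^l equals the ideal generated by all monomials x^s y^t with s ∈ S, t ∈ T, and s + t = d·l. -/

import Mathlib

open MvPolynomial Pointwise


lemma exists_rep {n : ℕ} (c : Fin n → ℕ) {s : ℕ}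
    (hs : s ∈ AddSubmonoid.closure (Set.range c)) :
    ∃ f : Fin n → ℕ, ∑ i, f i * c i = s := by
  induction hs using AddSubmonoid.closure_induction with
  | mem x hx =>
    obtain ⟨i, rfl⟩ := hx
    exact ⟨fun j => if j = i then 1 else 0, by simp⟩
  | zero => exact ⟨0, by simp⟩
  | add x y hx hy ihx ihy =>
    obtain ⟨f, hf⟩ := ihx; obtain ⟨g, hg⟩ := ihy
    exact ⟨f + g, by simp [add_mul, Finset.sum_add_distrib, hf, hg]⟩

lemma exists_bounded_rep {d : ℕ} (hd : 0 < d) {n : ℕ} (c : Fin (n + 1) → ℕ)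
    (j : Fin (n + 1)) (hj : c j = d) {s : ℕ}
    (hs : s ∈ AddSubmonoid.closure (Set.range c)) :
    ∃ f : Fin (n + 1) → ℕ, ∑ i, f i * c i = s ∧ d * ∑ i, f i ≤ s + d * d * (n + 1) := by
  obtain ⟨f, hf⟩ := exists_rep c hs
  classical
  set E := Finset.univ.erase j with hE
  set g : Fin (n + 1) → ℕ :=
    fun i => if i = j then f j + ∑ i' ∈ E, f i' / d * c i' else f i % d with hg
  have key : ∀ i ∈ E, f i % d * c i + f i / d * c i * d = f i * c i := by
    intro i _
    calc f i % d * c i + f i / d * c i * d = (f i % d + d * (f i / d)) * c i := by ring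
      _ = f i * c i := by rw [Nat.mod_add_div]
  have hgsum : ∑ i, g i * c i = s := by
    rw [← Finset.sum_erase_add _ _ (Finset.mem_univ j), ← hE]
    have h1 : ∀ i ∈ E, g i * c i = f i % d * c i := by
      intro i hi; rw [hg]; simp only [if_neg (Finset.ne_of_mem_erase hi)]
    rw [Finset.sum_congr rfl h1]
    have h2 : g j = f j + ∑ i' ∈ E, f i' / d * c i' := by rw [hg]; simp
    rw [h2, hj, add_mul, Finset.sum_mul]
    rw [← hf, ← Finset.sum_erase_add _ (fun i => f i * c i) (Finset.mem_univ j), ← hE, hj]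
    rw [← Finset.sum_congr rfl key, Finset.sum_add_distrib]
    ring
  refine ⟨g, hgsum, ?_⟩
  have hgj : d * g j ≤ s := by
    calc d * g j = g j * c j := by rw [hj, mul_comm]
      _ ≤ ∑ i, g i * c i := Finset.single_le_sum (f := fun i => g i * c i) (fun i _ => Nat.zero_le _) (Finset.mem_univ j)
      _ = s := hgsum
  have hrest : ∀ i ∈ E, d * g i ≤ d * d := by
    intro i hi
    rw [hg]; simp only [if_neg (Finset.ne_of_mem_erase hi)]
    exact Nat.mul_le_mul_left d (Nat.le_of_lt (Nat.mod_lt _ hd))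
  calc d * ∑ i, g i = ∑ i, d * g i := Finset.mul_sum _ _ _
    _ = ∑ i ∈ E, d * g i + d * g j := (Finset.sum_erase_add _ _ (Finset.mem_univ j)).symm
    _ ≤ ∑ i ∈ E, (d * d) + s := by
        exact Nat.add_le_add (Finset.sum_le_sum hrest) hgj
    _ ≤ s + d * d * (n + 1) := by
        rw [Finset.sum_const, smul_eq_mul]
        have : E.card ≤ n + 1 := le_trans (Finset.card_erase_le) (by simp)
        nlinarith



lemma prod_gen_pow {K : Type*} [Field K] {n : ℕ} (u v : Fin 2) (a b f : Fin n → ℕ) :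
    ∏ i, (X u ^ a i * X v ^ b i : MvPolynomial (Fin 2) K) ^ f i
      = X u ^ (∑ i, f i * a i) * X v ^ (∑ i, f i * b i) := by
  rw [Finset.prod_congr rfl (fun i _ => by
        rw [mul_pow, ← pow_mul, ← pow_mul, mul_comm (a i) (f i), mul_comm (b i) (f i)]),
    Finset.prod_mul_distrib, Finset.prod_pow_eq_pow_sum, Finset.prod_pow_eq_pow_sum]

lemma prod_gen {K : Type*} [Field K] {n l : ℕ} (u v : Fin 2) (a b : Fin n → ℕ)
    (g : Fin l → Fin n) :
    ∏ j, (X u ^ a (g j) * X v ^ b (g j) : MvPolynomial (Fin 2) K)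
      = X u ^ (∑ j, a (g j)) * X v ^ (∑ j, b (g j)) := by
  rw [Finset.prod_mul_distrib, Finset.prod_pow_eq_pow_sum, Finset.prod_pow_eq_pow_sum]

lemma case_mem {K : Type*} [Field K] {n d l : ℕ} (u v : Fin 2) (a b : Fin n → ℕ)
    (hab : ∀ i, a i + b i = d) (i0 : Fin n) (hi0 : a i0 = 0)
    {s t : ℕ} (hst : s + t = d * l)
    (fa : Fin n → ℕ) (hfa : ∑ i, fa i * a i = s) (hp : ∑ i, fa i ≤ l) :
    X u ^ s * X v ^ t ∈
      (Ideal.span (Set.range fun i => X u ^ a i * X v ^ b i) :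
        Ideal (MvPolynomial (Fin 2) K)) ^ l := by
  classical
  set f : Fin n → ℕ := fun i => fa i + if i = i0 then l - ∑ i', fa i' else 0 with hfdef
  have hfl : ∑ i, f i = l := by
    rw [hfdef]
    rw [Finset.sum_add_distrib, Finset.sum_ite_eq' Finset.univ i0 (fun _ => l - ∑ i', fa i')]
    simp only [Finset.mem_univ, if_true]
    omega
  have hfa' : ∑ i, f i * a i = s := by
    rw [hfdef]
    have h : ∀ i ∈ Finset.univ,
        (fa i + if i = i0 then l - ∑ i', fa i' else 0) * a i
          = fa i * a i + (if i = i0 then (l - ∑ i', fa i') * a i else 0) := by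
      intro i _; split <;> simp [add_mul]
    rw [Finset.sum_congr rfl h, Finset.sum_add_distrib,
      Finset.sum_ite_eq' Finset.univ i0 (fun i => (l - ∑ i', fa i') * a i)]
    simp [hi0, hfa]
  have hab' : ∑ i, f i * a i + ∑ i, f i * b i = d * l := by
    rw [← Finset.sum_add_distrib]
    calc ∑ i, (f i * a i + f i * b i) = ∑ i, f i * d :=
          Finset.sum_congr rfl fun i _ => by rw [← mul_add, hab]
      _ = (∑ i, f i) * d := by rw [Finset.sum_mul]
      _ = d * l := by rw [hfl, mul_comm]
  have hfb : ∑ i, f i * b i = t := by omega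
  have heq : (X u ^ s * X v ^ t : MvPolynomial (Fin 2) K)
      = ∏ i, (X u ^ a i * X v ^ b i : MvPolynomial (Fin 2) K) ^ f i := by
    rw [prod_gen_pow, hfa', hfb]
  rw [heq, ← hfl, ← Finset.prod_pow_eq_pow_sum]
  exact Ideal.prod_mem_prod fun i _ => Ideal.pow_mem_pow (Ideal.subset_span (Set.mem_range_self i)) _


/-- with `I = ⟨x^{a_i} y^{b_i}⟩ ⊆ k[x,y]` where `0 = a_0 < ⋯ < a_r = d`
and `b_i = d − a_i`, and `S = ⟨a_i⟩`, `T = ⟨b_i⟩`, there exists `L` such that for all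
`l ≥ L`, `I^l = ⟨x^s y^t : s ∈ S, t ∈ T, s + t = d·l⟩`. -/
theorem stmt4 {K : Type*} [Field K] {r : ℕ} (hr : 1 ≤ r) (d : ℕ)
    (a b : Fin (r + 1) → ℕ) (ha0 : a 0 = 0) (hmono : StrictMono a)
    (har : a (Fin.last r) = d) (hb : ∀ i, b i = d - a i) :
    ∃ L : ℕ, ∀ l : ℕ, L ≤ l →
      (Ideal.span (Set.range fun i => X 0 ^ a i * X 1 ^ b i) :
          Ideal (MvPolynomial (Fin 2) K)) ^ l
        = Ideal.span {m : MvPolynomial (Fin 2) K | ∃ s t : ℕ,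
            s ∈ AddSubmonoid.closure (Set.range a) ∧
            t ∈ AddSubmonoid.closure (Set.range b) ∧
            s + t = d * l ∧ m = X 0 ^ s * X 1 ^ t} := by
  have h0r : (0 : Fin (r + 1)) < Fin.last r := by
    rw [Fin.lt_def]; simpa using (show 0 < r from hr)
  have hd : 0 < d := by
    have h := hmono h0r; rw [ha0, har] at h; exact h
  have haled : ∀ i, a i ≤ d := fun i => har ▸ hmono.monotone (Fin.le_last i)
  have hab : ∀ i, a i + b i = d := fun i => by
    have := haled i; rw [hb]; omega
  have hb0 : b 0 = d := by rw [hb, ha0]; omega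
  have hblast : b (Fin.last r) = 0 := by rw [hb, har]; omega
  refine ⟨2 * d * (r + 1), fun l hl => le_antisymm ?_ ?_⟩
  · -- I^l ≤ RHS
    rw [show (Ideal.span (Set.range fun i => (X 0 ^ a i * X 1 ^ b i : MvPolynomial (Fin 2) K))) ^ l
        = Ideal.span ((Set.range fun i => (X 0 ^ a i * X 1 ^ b i : MvPolynomial (Fin 2) K)) ^ l)
        from Submodule.span_pow _ l, Ideal.span_le]
    intro x hx
    obtain ⟨F, hF⟩ := Set.mem_pow.mp hx
    choose g hg using fun j => (F j).2
    have hx' : x = ∏ j, (X 0 ^ a (g j) * X 1 ^ b (g j) : MvPolynomial (Fin 2) K) := by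
      rw [← hF, List.prod_ofFn]
      exact Finset.prod_congr rfl fun j _ => (hg j).symm
    apply Ideal.subset_span
    refine ⟨∑ j, a (g j), ∑ j, b (g j),
      sum_mem fun j _ => AddSubmonoid.subset_closure (Set.mem_range_self (g j)),
      sum_mem fun j _ => AddSubmonoid.subset_closure (Set.mem_range_self (g j)), ?_, ?_⟩
    · rw [← Finset.sum_add_distrib]
      calc ∑ j : Fin l, (a (g j) + b (g j)) = ∑ _j : Fin l, d :=
            Finset.sum_congr rfl fun j _ => hab (g j)
        _ = d * l := by simp [Finset.sum_const, mul_comm]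
    · rw [hx', prod_gen]
  · -- RHS ≤ I^l
    rw [Ideal.span_le]
    rintro m ⟨s, t, hsS, htT, hst, rfl⟩
    obtain ⟨fa, hfa, hpa⟩ := exists_bounded_rep hd a (Fin.last r) har hsS
    obtain ⟨fb, hfb, hpb⟩ := exists_bounded_rep hd b 0 hb0 htT
    have hcase : ∑ i, fa i ≤ l ∨ ∑ i, fb i ≤ l := by
      by_contra hc
      push_neg at hc
      have h1 : d * (∑ i, fa i + ∑ i, fb i) ≤ d * l + 2 * (d * d * (r + 1)) := by
        rw [mul_add]; omega
      have h2 : d * (l + 2 * d * (r + 1)) = d * l + 2 * (d * d * (r + 1)) := by ring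
      have h3 : ∑ i, fa i + ∑ i, fb i ≤ l + 2 * d * (r + 1) :=
        Nat.le_of_mul_le_mul_left (h2 ▸ h1) hd
      omega
    rcases hcase with hp | hq
    · exact case_mem (K := K) 0 1 a b hab 0 ha0 hst fa hfa hp
    · have hba : ∀ i, b i + a i = d := fun i => by rw [add_comm]; exact hab i
      have h := case_mem (K := K) 1 0 b a hba (Fin.last r) hblast
        (show t + s = d * l by omega) fb hfb hq
      have hset : (Set.range fun i => (X 1 ^ b i * X 0 ^ a i : MvPolynomial (Fin 2) K))
          = Set.range fun i => (X 0 ^ a i * X 1 ^ b i : MvPolynomial (Fin 2) K) :=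
        congrArg Set.range (funext fun i => mul_comm _ _)
      rw [hset, mul_comm (X 1 ^ t) (X 0 ^ s)] at h
      exact h
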